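/- Let j ≥ 3 be a natural number and set p = 2^(j−3). In the polynomial ring ℤ[w, x, y, z] one has the congruence T_j(w, x) · T_{j+1}(y, z) ≡ 4·w^{4p}x^{4p}y^{2p}z^{14p} + 4·w^{2p}x^{6p}y^{4p}z^{12p} + 2·w^{4p}x^{4p}y^{4p}z^{12p} + 4·w^{6p}x^{2p}y^{4p}z^{12p} + 4·w^{4p}x^{4p}y^{6p}z^{10p} + 4·w^{p}x^{7p}y^{8p}z^{8p} + 2·w^{2p}x^{6p}y^{8p}z^{8p} + 4·w^{3p}x^{5p}y^{8p}z^{8p} + w^{4p}x^{4p}y^{8p}z^{8p} + 4·w^{5p}x^{3p}y^{8p}z^{8p} + 2·w^{6p}x^{2p}y^{8p}z^{8p} + 4·w^{7p}x^{p}y^{8p}z^{8p} + 4·w^{4p}x^{4p}y^{10p}z^{6p} + 4·w^{2p}x^{6p}y^{12p}z^{4p} + 2·w^{4p}x^{4p}y^{12p}z^{4p} + 4·w^{6p}x^{2p}y^{12p}z^{4p} + 4·w^{4p}x^{4p}y^{14p}z^{2p} modulo 8. -/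
import Mathlib


open MvPolynomial

set_option maxHeartbeats 1000000
set_option maxRecDepth 100000

/-- For `m ≥ 1`, the polynomial `T_m(u, w) = ∑_{i=1}^{2^m − 1} (C(2^m, i)/2)·u^i·w^(2^m − i)`,
interpreted in any commutative ring. (The binomial coefficient `C(2^m, i)` is even for
`0 < i < 2^m`, so natural-number division by `2` is exact.) -/
noncomputable def TPoly {R : Type*} [CommRing R] (m : ℕ) (u w : R) : R :=
  ∑ i ∈ Finset.Ico 1 (2 ^ m), ((Nat.choose (2 ^ m) i / 2 : ℕ) : R) * u ^ i * w ^ (2 ^ m - i)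


lemma sq_add_two_pow_eight {R : Type*} [CommRing R] (x y : R) :
    ∃ d : R, (x + 2 * y) ^ 8 = x ^ 8 + 16 * d :=
  ⟨y * x ^ 7 + 7 * y ^ 2 * x ^ 6 + 28 * y ^ 3 * x ^ 5 + 70 * y ^ 4 * x ^ 4
    + 112 * y ^ 5 * x ^ 3 + 112 * y ^ 6 * x ^ 2 + 64 * y ^ 7 * x + 16 * y ^ 8, by ring⟩

lemma pow_eight_congr {R : Type*} [CommRing R] (u w : R) :
    ∀ t : ℕ, ∃ c : R, (u + w) ^ (2 ^ t * 8) = (u ^ 2 ^ t + w ^ 2 ^ t) ^ 8 + 16 * c := by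
  intro t
  induction t with
  | zero => exact ⟨0, by norm_num⟩
  | succ t ih =>
    obtain ⟨c, hc⟩ := ih
    obtain ⟨d, hd⟩ := sq_add_two_pow_eight (u ^ 2 ^ (t + 1) + w ^ 2 ^ (t + 1))
      (u ^ 2 ^ t * w ^ 2 ^ t)
    refine ⟨d + 2 * c * (u ^ 2 ^ t + w ^ 2 ^ t) ^ 8 + 16 * c ^ 2, ?_⟩
    have e1 : 2 ^ (t + 1) * 8 = 2 ^ t * 8 * 2 := by ring
    have e2 : (u ^ 2 ^ t + w ^ 2 ^ t) ^ 16
        = (u ^ 2 ^ (t + 1) + w ^ 2 ^ (t + 1) + 2 * (u ^ 2 ^ t * w ^ 2 ^ t)) ^ 8 := by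
      have : ∀ v : R, v ^ 2 ^ (t + 1) = (v ^ 2 ^ t) ^ 2 := by
        intro v; rw [← pow_mul, pow_succ]
      rw [this u, this w]; ring
    calc (u + w) ^ (2 ^ (t + 1) * 8) = ((u + w) ^ (2 ^ t * 8)) ^ 2 := by rw [e1, pow_mul]
      _ = ((u ^ 2 ^ t + w ^ 2 ^ t) ^ 8 + 16 * c) ^ 2 := by rw [hc]
      _ = (u ^ 2 ^ t + w ^ 2 ^ t) ^ 16 + 32 * c * (u ^ 2 ^ t + w ^ 2 ^ t) ^ 8
          + 256 * c ^ 2 := by ring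
      _ = (u ^ 2 ^ (t + 1) + w ^ 2 ^ (t + 1) + 2 * (u ^ 2 ^ t * w ^ 2 ^ t)) ^ 8
          + 32 * c * (u ^ 2 ^ t + w ^ 2 ^ t) ^ 8 + 256 * c ^ 2 := by rw [e2]
      _ = _ := by rw [hd]; ring

lemma two_mul_TPoly {R : Type*} [CommRing R] (m : ℕ) (hm : 1 ≤ m) (u w : R) :
    2 * TPoly m u w = (u + w) ^ 2 ^ m - u ^ 2 ^ m - w ^ 2 ^ m := by
  have h2m : 2 ≤ 2 ^ m := by
    calc 2 = 2 ^ 1 := rfl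
      _ ≤ 2 ^ m := Nat.pow_le_pow_right (by norm_num) hm
  calc 2 * TPoly m u w
      = ∑ i ∈ Finset.Ico 1 (2 ^ m),
          u ^ i * w ^ (2 ^ m - i) * ((2 ^ m).choose i : R) := by
        rw [TPoly, Finset.mul_sum]
        refine Finset.sum_congr rfl fun i hi => ?_
        simp only [Finset.mem_Ico] at hi
        have hdvd : 2 ∣ (2 ^ m).choose i :=
          Nat.Prime.dvd_choose_pow Nat.prime_two (by omega) (by omega)
        obtain ⟨k, hk⟩ := hdvd
        rw [hk, Nat.mul_div_cancel_left _ (by norm_num : 0 < 2)]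
        push_cast
        ring
    _ = (u + w) ^ 2 ^ m - u ^ 2 ^ m - w ^ 2 ^ m := by
        rw [add_pow, Finset.range_eq_Ico,
          Finset.sum_eq_sum_Ico_succ_bot (by omega : 0 < 2 ^ m + 1),
          Finset.sum_Ico_succ_top (by omega : 1 ≤ 2 ^ m)]
        simp only [pow_zero, Nat.sub_zero, Nat.choose_zero_right, Nat.cast_one, mul_one,
          one_mul, Nat.sub_self, Nat.choose_self]
        ring

lemma main_identity {R : Type*} [CommRing R] (a b yy zz c d T1 T2 : R)
    (h1 : 2 * T1 = (a + b) ^ 8 + 16 * c - a ^ 8 - b ^ 8)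
    (h2 : 2 * T2 = (yy ^ 2 + zz ^ 2) ^ 8 + 16 * d - (yy ^ 2) ^ 8 - (zz ^ 2) ^ 8) :
    4 * (T1 * T2
        - (4 * a ^ 4 * b ^ 4 * yy ^ 2 * zz ^ 14
          + 4 * a ^ 2 * b ^ 6 * yy ^ 4 * zz ^ 12
          + 2 * a ^ 4 * b ^ 4 * yy ^ 4 * zz ^ 12
          + 4 * a ^ 6 * b ^ 2 * yy ^ 4 * zz ^ 12
          + 4 * a ^ 4 * b ^ 4 * yy ^ 6 * zz ^ 10
          + 4 * a * b ^ 7 * yy ^ 8 * zz ^ 8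
          + 2 * a ^ 2 * b ^ 6 * yy ^ 8 * zz ^ 8
          + 4 * a ^ 3 * b ^ 5 * yy ^ 8 * zz ^ 8
          + a ^ 4 * b ^ 4 * yy ^ 8 * zz ^ 8
          + 4 * a ^ 5 * b ^ 3 * yy ^ 8 * zz ^ 8
          + 2 * a ^ 6 * b ^ 2 * yy ^ 8 * zz ^ 8
          + 4 * a ^ 7 * b * yy ^ 8 * zz ^ 8
          + 4 * a ^ 4 * b ^ 4 * yy ^ 10 * zz ^ 6
          + 4 * a ^ 2 * b ^ 6 * yy ^ 12 * zz ^ 4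
          + 2 * a ^ 4 * b ^ 4 * yy ^ 12 * zz ^ 4
          + 4 * a ^ 6 * b ^ 2 * yy ^ 12 * zz ^ 4
          + 4 * a ^ 4 * b ^ 4 * yy ^ 14 * zz ^ 2)) =
    4 * (8 * (2 * a * b ^ 7 * yy ^ 2 * zz ^ 14
          + 7 * a * b ^ 7 * yy ^ 4 * zz ^ 12
          + 14 * a * b ^ 7 * yy ^ 6 * zz ^ 10
          + 17 * a * b ^ 7 * yy ^ 8 * zz ^ 8
          + 14 * a * b ^ 7 * yy ^ 10 * zz ^ 6
          + 7 * a * b ^ 7 * yy ^ 12 * zz ^ 4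
          + 2 * a * b ^ 7 * yy ^ 14 * zz ^ 2
          + 7 * a ^ 2 * b ^ 6 * yy ^ 2 * zz ^ 14
          + 24 * a ^ 2 * b ^ 6 * yy ^ 4 * zz ^ 12
          + 49 * a ^ 2 * b ^ 6 * yy ^ 6 * zz ^ 10
          + 61 * a ^ 2 * b ^ 6 * yy ^ 8 * zz ^ 8
          + 49 * a ^ 2 * b ^ 6 * yy ^ 10 * zz ^ 6
          + 24 * a ^ 2 * b ^ 6 * yy ^ 12 * zz ^ 4
          + 7 * a ^ 2 * b ^ 6 * yy ^ 14 * zz ^ 2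
          + 14 * a ^ 3 * b ^ 5 * yy ^ 2 * zz ^ 14
          + 49 * a ^ 3 * b ^ 5 * yy ^ 4 * zz ^ 12
          + 98 * a ^ 3 * b ^ 5 * yy ^ 6 * zz ^ 10
          + 122 * a ^ 3 * b ^ 5 * yy ^ 8 * zz ^ 8
          + 98 * a ^ 3 * b ^ 5 * yy ^ 10 * zz ^ 6
          + 49 * a ^ 3 * b ^ 5 * yy ^ 12 * zz ^ 4
          + 14 * a ^ 3 * b ^ 5 * yy ^ 14 * zz ^ 2
          + 17 * a ^ 4 * b ^ 4 * yy ^ 2 * zz ^ 14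
          + 61 * a ^ 4 * b ^ 4 * yy ^ 4 * zz ^ 12
          + 122 * a ^ 4 * b ^ 4 * yy ^ 6 * zz ^ 10
          + 153 * a ^ 4 * b ^ 4 * yy ^ 8 * zz ^ 8
          + 122 * a ^ 4 * b ^ 4 * yy ^ 10 * zz ^ 6
          + 61 * a ^ 4 * b ^ 4 * yy ^ 12 * zz ^ 4
          + 17 * a ^ 4 * b ^ 4 * yy ^ 14 * zz ^ 2
          + 14 * a ^ 5 * b ^ 3 * yy ^ 2 * zz ^ 14
          + 49 * a ^ 5 * b ^ 3 * yy ^ 4 * zz ^ 12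
          + 98 * a ^ 5 * b ^ 3 * yy ^ 6 * zz ^ 10
          + 122 * a ^ 5 * b ^ 3 * yy ^ 8 * zz ^ 8
          + 98 * a ^ 5 * b ^ 3 * yy ^ 10 * zz ^ 6
          + 49 * a ^ 5 * b ^ 3 * yy ^ 12 * zz ^ 4
          + 14 * a ^ 5 * b ^ 3 * yy ^ 14 * zz ^ 2
          + 7 * a ^ 6 * b ^ 2 * yy ^ 2 * zz ^ 14
          + 24 * a ^ 6 * b ^ 2 * yy ^ 4 * zz ^ 12
          + 49 * a ^ 6 * b ^ 2 * yy ^ 6 * zz ^ 10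
          + 61 * a ^ 6 * b ^ 2 * yy ^ 8 * zz ^ 8
          + 49 * a ^ 6 * b ^ 2 * yy ^ 10 * zz ^ 6
          + 24 * a ^ 6 * b ^ 2 * yy ^ 12 * zz ^ 4
          + 7 * a ^ 6 * b ^ 2 * yy ^ 14 * zz ^ 2
          + 2 * a ^ 7 * b * yy ^ 2 * zz ^ 14
          + 7 * a ^ 7 * b * yy ^ 4 * zz ^ 12
          + 14 * a ^ 7 * b * yy ^ 6 * zz ^ 10
          + 17 * a ^ 7 * b * yy ^ 8 * zz ^ 8
          + 14 * a ^ 7 * b * yy ^ 10 * zz ^ 6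
          + 7 * a ^ 7 * b * yy ^ 12 * zz ^ 4
          + 2 * a ^ 7 * b * yy ^ 14 * zz ^ 2
          + (4 * a * b ^ 7 + 14 * a ^ 2 * b ^ 6 + 28 * a ^ 3 * b ^ 5 + 35 * a ^ 4 * b ^ 4 + 28 * a ^ 5 * b ^ 3 + 14 * a ^ 6 * b ^ 2 + 4 * a ^ 7 * b) * d
          + (4 * yy ^ 2 * zz ^ 14 + 14 * yy ^ 4 * zz ^ 12 + 28 * yy ^ 6 * zz ^ 10 + 35 * yy ^ 8 * zz ^ 8 + 28 * yy ^ 10 * zz ^ 6 + 14 * yy ^ 12 * zz ^ 4 + 4 * yy ^ 14 * zz ^ 2) * c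
          + 8 * (c * d))) := by
  linear_combination (2 * T2) * h1 + ((a + b) ^ 8 + 16 * c - a ^ 8 - b ^ 8) * h2

/-- Let `j ≥ 3` and `p = 2^(j−3)`. In `ℤ[w, x, y, z]`
(with `w = X 0`, `x = X 1`, `y = X 2`, `z = X 3`), the product
`T_j(w, x) · T_{j+1}(y, z)` is congruent modulo `8` to the indicated sum of
17 monomials (i.e. every coefficient of the difference is divisible by 8). -/
theorem T_product_expansion_mod_eight (j : ℕ) (hj : 3 ≤ j) (p : ℕ) (hp : p = 2 ^ (j - 3)) :
    ∀ m : Fin 4 →₀ ℕ, (8 : ℤ) ∣ MvPolynomial.coeff m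
      (TPoly j (X 0 : MvPolynomial (Fin 4) ℤ) (X 1) * TPoly (j + 1) (X 2) (X 3)
        - (4 * (X 0) ^ (4 * p) * (X 1) ^ (4 * p) * (X 2) ^ (2 * p) * (X 3) ^ (14 * p)
          + 4 * (X 0) ^ (2 * p) * (X 1) ^ (6 * p) * (X 2) ^ (4 * p) * (X 3) ^ (12 * p)
          + 2 * (X 0) ^ (4 * p) * (X 1) ^ (4 * p) * (X 2) ^ (4 * p) * (X 3) ^ (12 * p)
          + 4 * (X 0) ^ (6 * p) * (X 1) ^ (2 * p) * (X 2) ^ (4 * p) * (X 3) ^ (12 * p)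
          + 4 * (X 0) ^ (4 * p) * (X 1) ^ (4 * p) * (X 2) ^ (6 * p) * (X 3) ^ (10 * p)
          + 4 * (X 0) ^ p * (X 1) ^ (7 * p) * (X 2) ^ (8 * p) * (X 3) ^ (8 * p)
          + 2 * (X 0) ^ (2 * p) * (X 1) ^ (6 * p) * (X 2) ^ (8 * p) * (X 3) ^ (8 * p)
          + 4 * (X 0) ^ (3 * p) * (X 1) ^ (5 * p) * (X 2) ^ (8 * p) * (X 3) ^ (8 * p)
          + (X 0) ^ (4 * p) * (X 1) ^ (4 * p) * (X 2) ^ (8 * p) * (X 3) ^ (8 * p)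
          + 4 * (X 0) ^ (5 * p) * (X 1) ^ (3 * p) * (X 2) ^ (8 * p) * (X 3) ^ (8 * p)
          + 2 * (X 0) ^ (6 * p) * (X 1) ^ (2 * p) * (X 2) ^ (8 * p) * (X 3) ^ (8 * p)
          + 4 * (X 0) ^ (7 * p) * (X 1) ^ p * (X 2) ^ (8 * p) * (X 3) ^ (8 * p)
          + 4 * (X 0) ^ (4 * p) * (X 1) ^ (4 * p) * (X 2) ^ (10 * p) * (X 3) ^ (6 * p)
          + 4 * (X 0) ^ (2 * p) * (X 1) ^ (6 * p) * (X 2) ^ (12 * p) * (X 3) ^ (4 * p)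
          + 2 * (X 0) ^ (4 * p) * (X 1) ^ (4 * p) * (X 2) ^ (12 * p) * (X 3) ^ (4 * p)
          + 4 * (X 0) ^ (6 * p) * (X 1) ^ (2 * p) * (X 2) ^ (12 * p) * (X 3) ^ (4 * p)
          + 4 * (X 0) ^ (4 * p) * (X 1) ^ (4 * p) * (X 2) ^ (14 * p) * (X 3) ^ (2 * p))) := by
  intro m
  have hT1 := two_mul_TPoly j (by omega) (X 0 : MvPolynomial (Fin 4) ℤ) (X 1)
  have hT2 := two_mul_TPoly (j + 1) (by omega) (X 2 : MvPolynomial (Fin 4) ℤ) (X 3)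
  obtain ⟨c, hc⟩ := pow_eight_congr (X 0 : MvPolynomial (Fin 4) ℤ) (X 1) (j - 3)
  obtain ⟨d, hd⟩ := pow_eight_congr (X 2 : MvPolynomial (Fin 4) ℤ) (X 3) (j - 2)
  rw [← hp] at hc
  have hq2 : (2 : ℕ) ^ (j - 2) = p * 2 := by
    subst hp; rw [← pow_succ]; congr 1; omega
  rw [hq2] at hd
  have e1 : (2 : ℕ) ^ j = p * 8 := by
    subst hp; rw [show (8 : ℕ) = 2 ^ 3 from rfl, ← pow_add]; congr 1; omega
  have e2 : (2 : ℕ) ^ (j + 1) = p * 2 * 8 := by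
    subst hp; rw [mul_assoc, show (2 * 8 : ℕ) = 2 ^ 4 from rfl, ← pow_add]; congr 1; omega
  rw [e1, hc] at hT1
  rw [e2, hd] at hT2
  simp only [pow_mul] at hT1 hT2
  have key := main_identity ((X 0 : MvPolynomial (Fin 4) ℤ) ^ p) ((X 1) ^ p) ((X 2) ^ p)
    ((X 3) ^ p) c d _ _ hT1 hT2
  have key2 := mul_left_cancel₀ (by norm_num : (4 : MvPolynomial (Fin 4) ℤ) ≠ 0) key
  simp only [show ∀ k : ℕ, k * p = p * k from fun k => mul_comm k p, pow_mul]
  rw [key2, show (8 : MvPolynomial (Fin 4) ℤ) = C (8 : ℤ) from by simp, coeff_C_mul]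
  exact Dvd.intro _ rfl
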